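/- Let B = !![5, 2; 2, 1], φ = (3/4, 1/4) and ψ = (1/4, 1/4). Let ε, ε' ∈ {1, −1} and η, θ ∈ ℤ², and set φ' = ε·φ + η and ψ' = ε'·ψ + θ. Then for every coprime pair (p, q) ∈ ℤ² with (φ' − ψ')(B+I)·(p,q)ᵀ = 0, both p and q are odd, p·φ'₁ + q·φ'₂ ∈ (1/2)ℤ and p·ψ'₁ + q·ψ'₂ ∈ (1/2)ℤ, and for all r, s ∈ ℤ one has φ'(B+I)·(r,s)ᵀ ∈ ℤ and ψ'(B+I)·(r,s)ᵀ ∈ ℤ. (Hence both representations ρ_{φ'} and ρ_{ψ'} are central when restricted to the boundary torus of the knot complement.) -/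
import Mathlib


/-- The row vector `φ(B+I)` for `B = !![a, b; c, d]`. -/
noncomputable def rowBI (a b c d : ℤ) (v : ℝ × ℝ) : ℝ × ℝ :=
  (((a : ℝ) + 1) * v.1 + (c : ℝ) * v.2, (b : ℝ) * v.1 + ((d : ℝ) + 1) * v.2)

/-- The pairing of a real row vector with an integer column vector `(p, q)ᵀ`. -/
noncomputable def dotZ (v : ℝ × ℝ) (p q : ℤ) : ℝ := v.1 * (p : ℝ) + v.2 * (q : ℝ)

lemma both_odd_aux (A C p q : ℤ) (hA : Odd A) (hC : Odd C)
    (h : A * p + C * q = 0) (hpq : IsCoprime p q) : Odd p ∧ Odd q := by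
  have hev : Even (A * p + C * q) := by simp [h]
  have hiff : Even p ↔ Even q := by
    rw [Int.even_add, Int.even_mul, Int.even_mul] at hev
    constructor <;> intro h' <;>
      [exact ((hev.mp (Or.inr h')).resolve_left (Int.not_even_iff_odd.mpr hC));
       exact ((hev.mpr (Or.inr h')).resolve_left (Int.not_even_iff_odd.mpr hA))]
  rcases Int.even_or_odd p with hp | hp
  · exfalso
    have hq := hiff.mp hp
    have h2 : IsUnit (2 : ℤ) := hpq.isUnit_of_dvd' hp.two_dvd hq.two_dvd
    rw [Int.isUnit_iff] at h2
    omega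
  · exact ⟨hp, Int.not_even_iff_odd.mp (fun h' => (Int.not_even_iff_odd.mpr hp) (hiff.mpr h'))⟩

/-- Proposition "example": for `B = !![5, 2; 2, 1]`, `φ = (3/4, 1/4)`,
`ψ = (1/4, 1/4)`, any conjugate representatives `φ' = ε φ + η`, `ψ' = ε' ψ + θ` and any
coprime `(p, q)` with `(φ' - ψ')(B+I)·(p,q)ᵀ = 0` have `p, q` odd,
`β_{φ'}, β_{ψ'} ∈ (1/2)ℤ` and `α_{φ'}, α_{ψ'} ∈ ℤ`; hence both `ρ_{φ'}` and `ρ_{ψ'}`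
are central on the boundary torus of the knot complement. -/
theorem example_central_on_boundary (ε ε' : ℝ) (hε : ε = 1 ∨ ε = -1)
    (hε' : ε' = 1 ∨ ε' = -1) (η θ : ℤ × ℤ) :
    let φ' : ℝ × ℝ := (ε * (3 / 4) + (η.1 : ℝ), ε * (1 / 4) + (η.2 : ℝ))
    let ψ' : ℝ × ℝ := (ε' * (1 / 4) + (θ.1 : ℝ), ε' * (1 / 4) + (θ.2 : ℝ))
    ∀ p q : ℤ, IsCoprime p q → dotZ (rowBI 5 2 2 1 (φ' - ψ')) p q = 0 →
      Odd p ∧ Odd q ∧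
      (∃ n : ℤ, (p : ℝ) * φ'.1 + (q : ℝ) * φ'.2 = (n : ℝ) / 2) ∧
      (∃ n : ℤ, (p : ℝ) * ψ'.1 + (q : ℝ) * ψ'.2 = (n : ℝ) / 2) ∧
      (∀ r s : ℤ, (∃ n : ℤ, dotZ (rowBI 5 2 2 1 φ') r s = (n : ℝ)) ∧
        (∃ n : ℤ, dotZ (rowBI 5 2 2 1 ψ') r s = (n : ℝ))) := by
  obtain ⟨e, he, m, hm⟩ : ∃ e : ℤ, (e : ℝ) = ε ∧ ∃ m, e = 2 * m + 1 := by
    rcases hε with h | h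
    · exact ⟨1, by simp [h], 0, by ring⟩
    · exact ⟨-1, by simp [h], -1, by ring⟩
  obtain ⟨e', he', m', hm'⟩ : ∃ e : ℤ, (e : ℝ) = ε' ∧ ∃ m, e = 2 * m + 1 := by
    rcases hε' with h | h
    · exact ⟨1, by simp [h], 0, by ring⟩
    · exact ⟨-1, by simp [h], -1, by ring⟩
  subst he he'
  intro φ' ψ' p q hpq h0
  simp only [φ', ψ', dotZ, rowBI, Prod.fst_sub, Prod.snd_sub] at h0
  set A : ℤ := 5 * e - 2 * e' + 6 * (η.1 - θ.1) + 2 * (η.2 - θ.2) with hA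
  set C : ℤ := 2 * e - e' + 2 * (η.1 - θ.1) + 2 * (η.2 - θ.2) with hC
  have key : A * p + C * q = 0 := by
    have : ((A * p + C * q : ℤ) : ℝ) = 0 := by
      push_cast [hA, hC]
      linear_combination h0
    exact_mod_cast this
  have hoddA : Odd A := ⟨5 * m - e' + 3 * (η.1 - θ.1) + (η.2 - θ.2) + 2, by omega⟩
  have hoddC : Odd C := ⟨e - m' + (η.1 - θ.1) + (η.2 - θ.2) - 1, by omega⟩
  obtain ⟨hp, hq⟩ := both_odd_aux A C p q hoddA hoddC key hpq
  have hpk : Even (p + q) := hp.add_odd hq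
  obtain ⟨k, hk⟩ := hpk
  have hkR : (p : ℝ) + q = 2 * k := by exact_mod_cast (by omega : p + q = 2 * k)
  refine ⟨hp, hq, ⟨e * (p + k) + 2 * (p * η.1 + q * η.2), ?_⟩,
    ⟨e' * k + 2 * (p * θ.1 + q * θ.2), ?_⟩, fun r s => ⟨⟨(5 * e + 6 * η.1 + 2 * η.2) * r +
      (2 * e + 2 * η.1 + 2 * η.2) * s, ?_⟩,
      ⟨(2 * e' + 6 * θ.1 + 2 * θ.2) * r + (e' + 2 * θ.1 + 2 * θ.2) * s, ?_⟩⟩⟩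
  · show (p : ℝ) * ((e : ℝ) * (3 / 4) + (η.1 : ℝ)) + (q : ℝ) * ((e : ℝ) * (1 / 4) + (η.2 : ℝ)) = _
    push_cast
    linear_combination ((e : ℝ) / 4) * hkR
  · show (p : ℝ) * ((e' : ℝ) * (1 / 4) + (θ.1 : ℝ)) + (q : ℝ) * ((e' : ℝ) * (1 / 4) + (θ.2 : ℝ)) = _
    push_cast
    linear_combination ((e' : ℝ) / 4) * hkR
  · simp only [φ', dotZ, rowBI]
    push_cast
    ring
  · simp only [ψ', dotZ, rowBI]
    push_cast
    ring
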